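/- Let G = (V, E_1, …, E_N) be an infinite, locally finite, connected edge-coloured graph with N colours, and fix p ∈ [0,1]^{N−1} and q ∈ [0,1]. Suppose that for every x ∈ V there is a finite set S_x ⊆ V with x ∈ S_x and ψ_{p,q}(x,S_x) < 1, and suppose moreover that M := sup_{x∈V} |S_x| < ∞ and θ₀ := sup_{x∈V} ψ_{p,q}(x,S_x) < 1. Then for every finite set A ⊆ V, χ(A) := sup_{u∈V} Σ_{v∈A} P_{p,q}(u ↔_A v) ≤ M / (1 − θ₀). -/

import Mathlib

open MeasureTheory ENNReal Set
open scoped Classical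

namespace InhomPerc

variable {V : Type*} {N : ℕ}

/-- The edge set of an edge-coloured graph: the union of all colour classes. -/
def Eset (E : Fin N → Set (Sym2 V)) : Set (Sym2 V) := ⋃ i, E i

/-- The colour classes are mutually disjoint. -/
def DisjointColours (E : Fin N → Set (Sym2 V)) : Prop :=
  ∀ i j : Fin N, i ≠ j → Disjoint (E i) (E j)

/-- Every edge is a pair of two *distinct* vertices. -/
def NoLoops (E : Fin N → Set (Sym2 V)) : Prop := ∀ e ∈ Eset E, ¬ e.IsDiag

/-- The underlying simple graph of the edge-coloured graph. -/
def graph (E : Fin N → Set (Sym2 V)) : SimpleGraph V where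
  Adj u v := u ≠ v ∧ s(u, v) ∈ Eset E
  symm := by
    refine ⟨fun u v h => ?_⟩
    refine ⟨h.1.symm, ?_⟩
    rw [Sym2.eq_swap]
    exact h.2
  loopless := ⟨fun v h => h.1 rfl⟩

/-- Local finiteness: every vertex lies in finitely many edges. -/
def LocFin (E : Fin N → Set (Sym2 V)) : Prop :=
  ∀ v : V, {e ∈ Eset E | v ∈ e}.Finite

/-- Connectivity of the edge-coloured graph. -/
def ConnectedGraph (E : Fin N → Set (Sym2 V)) : Prop := (graph E).Connected

/-- Quasi-transitivity: the vertices can be partitioned into finitely many classes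
such that vertices in the same class are related by a coloured graph automorphism. -/
def QuasiTransitive (E : Fin N → Set (Sym2 V)) : Prop :=
  ∃ (k : ℕ) (c : V → Fin k), ∀ u v : V, c u = c v →
    ∃ f : V ≃ V, (∀ (i : Fin N) (e : Sym2 V), e ∈ E i ↔ e.map f ∈ E i) ∧ f v = u

/-- Graph distance. -/
noncomputable def dist (E : Fin N → Set (Sym2 V)) (u v : V) : ℕ := (graph E).dist u v

/-- Percolation configurations: each (potential) edge is open (`true`) or closed. -/
abbrev Config (V : Type*) := Sym2 V → Bool

/-- `x` is joined to `y` by a path of open edges all of whose endpoints lie in `S`. -/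
def ConnIn (E : Fin N → Set (Sym2 V)) (ω : Config V) (S : Set V) (x y : V) : Prop :=
  Relation.ReflTransGen
    (fun a b => a ∈ S ∧ b ∈ S ∧ s(a, b) ∈ Eset E ∧ ω s(a, b) = true) x y

/-- The open cluster of `x`. -/
def cluster (E : Fin N → Set (Sym2 V)) (ω : Config V) (x : V) : Set V :=
  {y | ConnIn E ω Set.univ x y}

/-- The retention probability of an edge `e` under the parameter vector `r`:
`r i` for an edge of colour `i`, `0` for non-edges (by disjointness at most one
summand is nonzero). -/
noncomputable def edgeProb (E : Fin N → Set (Sym2 V)) (r : Fin N → ℝ) (e : Sym2 V) : ℝ :=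
  ∑ i : Fin N, if e ∈ E i then r i else 0

/-- `P` is the family of inhomogeneous percolation (product) measures: for each valid
parameter vector `r` it is a probability measure whose cylinder probabilities are the
products of the individual edge-retention probabilities. -/
def IsPercFamily (E : Fin N → Set (Sym2 V)) (P : (Fin N → ℝ) → Measure (Config V)) : Prop :=
  ∀ r : Fin N → ℝ, (∀ i, r i ∈ Icc (0 : ℝ) 1) →
    IsProbabilityMeasure (P r) ∧
    ∀ (F : Finset (Sym2 V)) (σ : Sym2 V → Bool),
      P r {ω | ∀ e ∈ F, ω e = σ e} =
        ∏ e ∈ F, ENNReal.ofReal (if σ e then edgeProb E r e else 1 - edgeProb E r e)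

/-- The full parameter vector `(p₁, …, p_{N-1}, q)`. -/
noncomputable def pFull (N : ℕ) (p : Fin (N - 1) → ℝ) (q : ℝ) : Fin N → ℝ :=
  fun i => if h : (i : ℕ) < N - 1 then p ⟨i, h⟩ else q

/-- The percolation function `θ`. -/
noncomputable def theta (E : Fin N → Set (Sym2 V)) (P : (Fin N → ℝ) → Measure (Config V))
    (r : Fin N → ℝ) : ℝ≥0∞ :=
  ⨆ x : V, P r {ω | (cluster E ω x).Infinite}

/-- The susceptibility `χ`. -/
noncomputable def chi (E : Fin N → Set (Sym2 V)) (P : (Fin N → ℝ) → Measure (Config V))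
    (r : Fin N → ℝ) : ℝ≥0∞ :=
  ⨆ x : V, ∫⁻ ω, ((cluster E ω x).encard : ℝ≥0∞) ∂(P r)

/-- The `θ`-critical surface. -/
noncomputable def qTheta (E : Fin N → Set (Sym2 V)) (P : (Fin N → ℝ) → Measure (Config V))
    (p : Fin (N - 1) → ℝ) : ℝ :=
  sInf (insert (1 : ℝ) {q | q ∈ Icc (0 : ℝ) 1 ∧ 0 < theta E P (pFull N p q)})

/-- The `χ`-critical surface. -/
noncomputable def qChi (E : Fin N → Set (Sym2 V)) (P : (Fin N → ℝ) → Measure (Config V))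
    (p : Fin (N - 1) → ℝ) : ℝ :=
  sInf (insert (1 : ℝ) {q | q ∈ Icc (0 : ℝ) 1 ∧ chi E P (pFull N p q) = ⊤})

/-- `ψ_{p,q}(x,S) = Σᵢ pᵢ Σ_{{y,z} ∈ ΔS ∩ Eᵢ} P(x ↔_S y)` (each boundary edge
is enumerated by its unique orientation `y ∈ S`, `z ∉ S`). -/
noncomputable def psi (E : Fin N → Set (Sym2 V)) (P : (Fin N → ℝ) → Measure (Config V))
    (r : Fin N → ℝ) (x : V) (S : Finset V) : ℝ≥0∞ :=
  ∑ i : Fin N, ENNReal.ofReal (r i) *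
    ∑ y ∈ S, ∑' z : V,
      (if z ∉ S ∧ s(y, z) ∈ E i then P r {ω | ConnIn E ω ↑S x y} else 0)

/-- The `ψ`-critical surface. -/
noncomputable def qPsi (E : Fin N → Set (Sym2 V)) (P : (Fin N → ℝ) → Measure (Config V))
    (p : Fin (N - 1) → ℝ) : ℝ :=
  sSup {q | q ∈ Icc (0 : ℝ) 1 ∧
    ∀ x : V, ∃ S : Finset V, x ∈ S ∧ psi E P (pFull N p q) x S < 1}

/-- The event that `x` is joined by an open path to `∂Λ_k^x` (the set of vertices
at graph distance exactly `k` from `x`). -/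
def ConnSphere (E : Fin N → Set (Sym2 V)) (ω : Config V) (x : V) (k : ℕ) : Prop :=
  ∃ y : V, dist E x y = k ∧ ConnIn E ω Set.univ x y


/-! ### Auxiliary machinery for Statement 4 -/

section Cylinders
variable {V : Type*}

/-- Cylinder event. -/
def cylEvent (F : Finset (Sym2 V)) (σ : Sym2 V → Bool) : Set (Config V) :=
  {ω | ∀ e ∈ F, ω e = σ e}

/-- Extend a partial assignment on `F` by `false`. -/
noncomputable def patch (F : Finset (Sym2 V)) (g : {e // e ∈ F} → Bool) : Config V :=
  fun e => if h : e ∈ F then g ⟨e, h⟩ else false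

/-- An event depends only on edges in `F`. -/
def EvLocal (F : Finset (Sym2 V)) (s : Set (Config V)) : Prop :=
  ∀ ω ω' : Config V, (∀ e ∈ F, ω e = ω' e) → ω ∈ s → ω' ∈ s

lemma EvLocal.inter {F F' : Finset (Sym2 V)} {s t : Set (Config V)}
    (hs : EvLocal F s) (ht : EvLocal F' t) : EvLocal (F ∪ F') (s ∩ t) := by
  intro ω ω' hag hm
  exact ⟨hs ω ω' (fun e he => hag e (Finset.mem_union_left _ he)) hm.1,
    ht ω ω' (fun e he => hag e (Finset.mem_union_right _ he)) hm.2⟩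

lemma cylEvent_measurable (F : Finset (Sym2 V)) (σ : Sym2 V → Bool) :
    MeasurableSet (cylEvent F σ) := by
  have h : cylEvent F σ = ⋂ e ∈ F, {ω : Config V | ω e = σ e} := by
    ext ω; simp [cylEvent]
  rw [h]
  refine MeasurableSet.biInter (F.countable_toSet) fun e _ => ?_
  have h2 : {ω : Config V | ω e = σ e} = (fun ω : Config V => ω e) ⁻¹' {σ e} := rfl
  rw [h2]
  exact (measurable_pi_apply e) (measurableSet_singleton (σ e))

lemma patch_eq {F : Finset (Sym2 V)} (g : {e // e ∈ F} → Bool) {e : Sym2 V} (he : e ∈ F) :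
    patch F g e = g ⟨e, he⟩ := dif_pos he

/-- Decomposition of a local event into cylinders. -/
lemma local_decomp {F : Finset (Sym2 V)} {s : Set (Config V)} (hs : EvLocal F s) :
    s = ⋃ g ∈ Finset.univ.filter (fun g : {e // e ∈ F} → Bool => patch F g ∈ s),
      cylEvent F (patch F g) := by
  ext ω
  simp only [Set.mem_iUnion, Finset.mem_filter, Finset.mem_univ, true_and]
  constructor
  · intro hω
    refine ⟨fun e => ω e.1, ?_, ?_⟩
    · exact hs ω _ (fun e he => (patch_eq (fun e => ω e.1) he).symm) hω
    · intro e he; exact (patch_eq (fun e => ω e.1) he).symm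
  · rintro ⟨g, hg, hcyl⟩
    exact hs (patch F g) ω (fun e he => (hcyl e he).symm) hg

lemma local_measurableSet {F : Finset (Sym2 V)} {s : Set (Config V)} (hs : EvLocal F s) :
    MeasurableSet s := by
  rw [local_decomp hs]
  exact (Finset.univ.filter _).measurableSet_biUnion fun g _ => cylEvent_measurable _ _

lemma cylEvent_disjoint {F : Finset (Sym2 V)} {g g' : {e // e ∈ F} → Bool} (h : g ≠ g') :
    Disjoint (cylEvent F (patch F g)) (cylEvent F (patch F g')) := by
  rw [Set.disjoint_left]
  intro ω h1 h2
  apply h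
  funext e
  have e1 := h1 e.1 e.2
  have e2 := h2 e.1 e.2
  rw [patch_eq _ e.2] at e1; rw [patch_eq _ e.2] at e2
  rw [← e1, ← e2]

/-- Measure of a local event as a sum over cylinders. -/
lemma meas_local_eq_sum (μ : Measure (Config V)) {F : Finset (Sym2 V)} {s : Set (Config V)}
    (hs : EvLocal F s) :
    μ s = ∑ g ∈ Finset.univ.filter (fun g : {e // e ∈ F} → Bool => patch F g ∈ s),
      μ (cylEvent F (patch F g)) := by
  conv_lhs => rw [local_decomp hs]
  exact measure_biUnion_finset
    (fun g _ g' _ hgg => cylEvent_disjoint hgg)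
    (fun g _ => cylEvent_measurable _ _)

end Cylinders

section Indep
variable {V : Type*} (μ : Measure (Config V)) (w : Sym2 V → Bool → ℝ≥0∞)
variable (hcyl : ∀ (F : Finset (Sym2 V)) (σ : Sym2 V → Bool),
  μ (cylEvent F σ) = ∏ e ∈ F, w e (σ e))

include hcyl

lemma cyl_inter_cyl {F₁ F₂ : Finset (Sym2 V)} (hF : Disjoint F₁ F₂)
    (σ τ : Sym2 V → Bool) :
    μ (cylEvent F₁ σ ∩ cylEvent F₂ τ) = μ (cylEvent F₁ σ) * μ (cylEvent F₂ τ) := by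
  set ρ : Sym2 V → Bool := fun e => if e ∈ F₁ then σ e else τ e with hρ
  have hset : cylEvent F₁ σ ∩ cylEvent F₂ τ = cylEvent (F₁ ∪ F₂) ρ := by
    ext ω
    simp only [cylEvent, Set.mem_inter_iff, Set.mem_setOf_eq, Finset.mem_union]
    constructor
    · rintro ⟨h1, h2⟩ e he
      rcases he with he | he
      · rw [hρ]; simp only [he, if_pos]; exact h1 e he
      · have : e ∉ F₁ := fun h => (Finset.disjoint_left.mp hF h) he
        rw [hρ]; simp only [this, if_neg, if_false]; exact h2 e he
    · intro h
      constructor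
      · intro e he
        have h1 := h e (Or.inl he)
        exact h1.trans (by simp [hρ, he])
      · intro e he
        have h2 := h e (Or.inr he)
        have h3 : e ∉ F₁ := fun h' => (Finset.disjoint_left.mp hF h') he
        exact h2.trans (by simp [hρ, h3])
  rw [hset, hcyl, hcyl, hcyl, Finset.prod_union hF]
  congr 1
  · exact Finset.prod_congr rfl fun e he => by rw [hρ]; simp [he]
  · refine Finset.prod_congr rfl fun e he => ?_
    have : e ∉ F₁ := fun h' => (Finset.disjoint_left.mp hF h') he
    rw [hρ]; simp [this]

lemma cyl_inter_local {F₁ F₂ : Finset (Sym2 V)} (hF : Disjoint F₁ F₂)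
    (σ : Sym2 V → Bool) {s : Set (Config V)} (hs : EvLocal F₂ s) :
    μ (cylEvent F₁ σ ∩ s) = μ (cylEvent F₁ σ) * μ s := by
  have hdec := local_decomp hs
  conv_lhs => rw [hdec]
  rw [Set.inter_iUnion₂]
  rw [measure_biUnion_finset
    (fun g _ g' _ hgg => Set.disjoint_of_subset Set.inter_subset_right
      Set.inter_subset_right (cylEvent_disjoint hgg))
    (fun g _ => ((cylEvent_measurable _ _).inter (cylEvent_measurable _ _)))]
  calc ∑ g ∈ Finset.univ.filter (fun g : {e // e ∈ F₂} → Bool => patch F₂ g ∈ s),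
        μ (cylEvent F₁ σ ∩ cylEvent F₂ (patch F₂ g))
      = ∑ g ∈ Finset.univ.filter (fun g : {e // e ∈ F₂} → Bool => patch F₂ g ∈ s),
        μ (cylEvent F₁ σ) * μ (cylEvent F₂ (patch F₂ g)) := by
        exact Finset.sum_congr rfl fun g _ => cyl_inter_cyl μ w hcyl hF _ _
    _ = μ (cylEvent F₁ σ) * μ s := by
        rw [← Finset.mul_sum, ← meas_local_eq_sum μ hs]

lemma indep_of_local {F₁ F₂ : Finset (Sym2 V)} (hF : Disjoint F₁ F₂)
    {s₁ s₂ : Set (Config V)} (h1 : EvLocal F₁ s₁) (h2 : EvLocal F₂ s₂) :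
    μ (s₁ ∩ s₂) = μ s₁ * μ s₂ := by
  have hdec := local_decomp h1
  conv_lhs => rw [hdec]
  rw [Set.iUnion₂_inter]
  rw [measure_biUnion_finset
    (fun g _ g' _ hgg => Set.disjoint_of_subset Set.inter_subset_left
      Set.inter_subset_left (cylEvent_disjoint hgg))
    (fun g _ => ((cylEvent_measurable _ _).inter (local_measurableSet h2)))]
  calc ∑ g ∈ Finset.univ.filter (fun g : {e // e ∈ F₁} → Bool => patch F₁ g ∈ s₁),
        μ (cylEvent F₁ (patch F₁ g) ∩ s₂)
      = ∑ g ∈ Finset.univ.filter (fun g : {e // e ∈ F₁} → Bool => patch F₁ g ∈ s₁),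
        μ (cylEvent F₁ (patch F₁ g)) * μ s₂ := by
        exact Finset.sum_congr rfl fun g _ => cyl_inter_local μ w hcyl hF _ h2
    _ = μ s₁ * μ s₂ := by rw [← Finset.sum_mul, ← meas_local_eq_sum μ h1]

lemma indep3_of_local {F₁ F₂ F₃ : Finset (Sym2 V)} (h12 : Disjoint F₁ F₂)
    (h13 : Disjoint F₁ F₃) (h23 : Disjoint F₂ F₃)
    {s₁ s₂ s₃ : Set (Config V)} (h1 : EvLocal F₁ s₁) (h2 : EvLocal F₂ s₂)
    (h3 : EvLocal F₃ s₃) :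
    μ (s₁ ∩ s₂ ∩ s₃) = μ s₁ * μ s₂ * μ s₃ := by
  rw [Set.inter_assoc]
  rw [indep_of_local μ w hcyl (Finset.disjoint_union_right.mpr ⟨h12, h13⟩) h1 (h2.inter h3)]
  rw [indep_of_local μ w hcyl h23 h2 h3, mul_assoc]

end Indep

section Conn
variable {V : Type*} {N : ℕ} {E : Fin N → Set (Sym2 V)} {ω : Config V}

lemma connIn_mono_set {S S' : Set V} (h : S ⊆ S') {x y : V} :
    ConnIn E ω S x y → ConnIn E ω S' x y :=
  Relation.ReflTransGen.mono (fun a b hab => ⟨h hab.1, h hab.2.1, hab.2.2⟩) _ _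

lemma connIn_mem_right {W : Finset V} {x y : V} (hx : x ∈ W)
    (h : ConnIn E ω ↑W x y) : y ∈ W := by
  rcases h.cases_tail with h | ⟨c, _, hs⟩
  · exact h ▸ hx
  · exact hs.2.1

/-- the event `x ↔_W y` depends only on edges inside `W`. -/
lemma connIn_local (E : Fin N → Set (Sym2 V)) (W : Finset V) (x y : V) :
    EvLocal W.sym2 {ω : Config V | ConnIn E ω ↑W x y} := by
  intro ω ω' hag h
  refine Relation.ReflTransGen.mono ?_ _ _ h
  rintro a b ⟨ha, hb, he, ho⟩
  refine ⟨ha, hb, he, ?_⟩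
  rw [← hag _ (Finset.mk_mem_sym2_iff.mpr ⟨ha, hb⟩)]
  exact ho

/-- The event that the open cluster of `u` inside `T` is exactly `C₀`. -/
def ECl (E : Fin N → Set (Sym2 V)) (T : Finset V) (u : V) (C₀ : Finset V) :
    Set (Config V) :=
  {ω | ∀ w : V, ConnIn E ω ↑T u w ↔ w ∈ C₀}

lemma ECl_total {T : Finset V} {u : V} (hu : u ∈ T) (ω : Config V) :
    ω ∈ ECl E T u (T.filter fun w => ConnIn E ω ↑T u w) := by
  intro w
  simp only [Finset.mem_filter]
  exact ⟨fun h => ⟨connIn_mem_right hu h, h⟩, fun h => h.2⟩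

lemma ECl_disjoint {T : Finset V} {u : V} {C₀ C₁ : Finset V} (h : C₀ ≠ C₁) :
    Disjoint (ECl E T u C₀) (ECl E T u C₁) := by
  rw [Set.disjoint_left]
  intro ω h0 h1
  exact h (Finset.ext fun w => (h0 w).symm.trans (h1 w))

lemma ECl_mem_of_self {T : Finset V} {u : V} {C₀ : Finset V} {ω : Config V}
    (h : ω ∈ ECl E T u C₀) : u ∈ C₀ := (h u).mp Relation.ReflTransGen.refl

/-- The cluster event is local to the edges inside `T` touching `C₀`. -/
lemma ECl_local {T : Finset V} {u : V} {C₀ : Finset V} :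
    EvLocal (T.sym2.filter fun e => ∃ a ∈ C₀, a ∈ e) (ECl E T u C₀) := by
  intro ω ω' hag hω
  have agree : ∀ a b : V, a ∈ C₀ → a ∈ T → b ∈ T → ω s(a, b) = ω' s(a, b) := by
    intro a b ha haT hbT
    exact hag _ (Finset.mem_filter.mpr ⟨Finset.mk_mem_sym2_iff.mpr ⟨haT, hbT⟩,
      ⟨a, ha, Sym2.mem_mk_left a b⟩⟩)
  have fwd : ∀ w, ConnIn E ω ↑T u w → ConnIn E ω' ↑T u w := by
    intro w h
    induction h with
    | refl => exact Relation.ReflTransGen.refl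
    | @tail c d huc hcd ih =>
      rcases hcd with ⟨hcT, hdT, he, ho⟩
      have hc : c ∈ C₀ := (hω c).mp huc
      refine ih.tail ⟨hcT, hdT, he, ?_⟩
      rw [← agree c d hc hcT hdT]
      exact ho
  have bwd : ∀ w, ConnIn E ω' ↑T u w → w ∈ C₀ := by
    intro w h
    induction h with
    | refl => exact ECl_mem_of_self hω
    | @tail c d huc hcd ih =>
      rcases hcd with ⟨hcT, hdT, he, ho⟩
      have hcw : ConnIn E ω ↑T u c := (hω c).mpr ih
      have hoc : ω s(c, d) = true := by
        rw [agree c d ih hcT hdT]; exact ho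
      exact (hω d).mp (hcw.tail ⟨hcT, hdT, he, hoc⟩)
  intro w
  exact ⟨fun h => bwd w h, fun h => fwd w ((hω w).mpr h)⟩

/-- last-exit decomposition. -/
lemma exit_lemma {R : V → V → Prop} {C : Set V} {a b : V}
    (h : Relation.ReflTransGen R a b) (ha : a ∈ C) :
    b ∉ C → ∃ y z, y ∈ C ∧ z ∉ C ∧ R y z ∧
      Relation.ReflTransGen (fun c d => R c d ∧ c ∉ C ∧ d ∉ C) z b := by
  induction h with
  | refl => exact fun hb => absurd ha hb
  | @tail c d hac hcd ih =>
    intro hd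
    by_cases hc : c ∈ C
    · exact ⟨c, d, hc, hd, hcd, Relation.ReflTransGen.refl⟩
    · obtain ⟨y, z, hy, hz, hR, hsuf⟩ := ih hc
      exact ⟨y, z, hy, hz, hR, hsuf.tail ⟨hcd, hc, hd⟩⟩

end Conn

/-- If every vertex `x` has a finite set `S_x ∋ x` with `ψ(x,S_x) < 1`,
`M := sup_x |S_x| < ∞` and `θ₀ := sup_x ψ(x,S_x) < 1`, then for every finite `A`,
`χ(A) := sup_u Σ_{v∈A} P(u ↔_A v) ≤ M / (1 - θ₀)`. -/
theorem restricted_susceptibility_bound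
    {V : Type*} [Countable V] [Infinite V] {N : ℕ} (hN : 0 < N)
    (E : Fin N → Set (Sym2 V))
    (hdisj : DisjointColours E) (hloops : NoLoops E)
    (hlf : LocFin E) (hconn : ConnectedGraph E)
    (P : (Fin N → ℝ) → Measure (Config V)) (hP : IsPercFamily E P)
    (p : Fin (N - 1) → ℝ) (hp : ∀ i, p i ∈ Icc (0 : ℝ) 1)
    (q : ℝ) (hq : q ∈ Icc (0 : ℝ) 1)
    (Sx : V → Finset V) (hSx : ∀ x : V, x ∈ Sx x)
    (hpsi : ∀ x : V, psi E P (pFull N p q) x (Sx x) < 1)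
    (M θ₀ : ℝ≥0∞)
    (hM : M = ⨆ x : V, ((Sx x).card : ℝ≥0∞)) (hMfin : M ≠ ⊤)
    (hθ : θ₀ = ⨆ x : V, psi E P (pFull N p q) x (Sx x)) (hθlt : θ₀ < 1) :
    ∀ A : Finset V,
      (⨆ u : V, ∑ v ∈ A, P (pFull N p q) {ω | ConnIn E ω ↑A u v}) ≤ M / (1 - θ₀) := by
  intro A
  set r : Fin N → ℝ := pFull N p q with hrdef
  have hrmem : ∀ i, r i ∈ Icc (0 : ℝ) 1 := by
    intro i
    rw [hrdef]
    unfold pFull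
    by_cases h : (i : ℕ) < N - 1
    · rw [dif_pos h]; exact hp _
    · rw [dif_neg h]; exact hq
  have hr0 : ∀ i, 0 ≤ r i := fun i => (hrmem i).1
  haveI hprob : IsProbabilityMeasure (P r) := (hP r hrmem).1
  have hcyl : ∀ (F : Finset (Sym2 V)) (σ : Sym2 V → Bool),
      P r (cylEvent F σ) = ∏ e ∈ F,
        (fun e b => ENNReal.ofReal (if b then edgeProb E r e else 1 - edgeProb E r e)) e (σ e) :=
    (hP r hrmem).2
  have hw_true : ∀ e : Sym2 V,
      P r {ω : Config V | ω e = true} = ENNReal.ofReal (edgeProb E r e) := by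
    intro e
    have h1 : {ω : Config V | ω e = true} = cylEvent {e} (fun _ => true) := by
      ext ω; simp [cylEvent]
    rw [h1, hcyl]
    simp
  have fle1 : ∀ z : V, ∑ v ∈ A, P r {ω | ConnIn E ω ↑A z v} ≤ (A.card : ℝ≥0∞) := by
    intro z
    calc ∑ v ∈ A, P r {ω | ConnIn E ω ↑A z v} ≤ ∑ _v ∈ A, 1 :=
          Finset.sum_le_sum fun v _ => prob_le_one
      _ = (A.card : ℝ≥0∞) := by simp
  set X : ℝ≥0∞ := ⨆ u : V, ∑ v ∈ A, P r {ω | ConnIn E ω ↑A u v} with hX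
  have hXle : X ≤ (A.card : ℝ≥0∞) := iSup_le fle1
  have hXne : X ≠ ⊤ := ne_top_of_le_ne_top (natCast_ne_top _) hXle
  have hfX : ∀ z : V, ∑ v ∈ A, P r {ω | ConnIn E ω ↑A z v} ≤ X := fun z => by
    rw [hX]; exact le_iSup (fun u : V => ∑ v ∈ A, P r {ω | ConnIn E ω ↑A u v}) z
  have key : ∀ u : V, ∑ v ∈ A, P r {ω | ConnIn E ω ↑A u v} ≤ M + θ₀ * X := by
    intro u
    by_cases huA : u ∈ A
    case neg =>
      have hz : ∀ v ∈ A, P r {ω | ConnIn E ω ↑A u v} = 0 := by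
        intro v hv
        have he : {ω : Config V | ConnIn E ω ↑A u v} = ∅ := by
          ext ω
          simp only [Set.mem_setOf_eq, Set.mem_empty_iff_false, iff_false]
          intro h
          rcases h.cases_head with h | ⟨c, hc, _⟩
          · exact huA (by rw [h]; exact hv)
          · exact huA hc.1
        rw [he, measure_empty]
      rw [Finset.sum_congr rfl hz]
      simp
    case pos =>
      set S : Finset V := Sx u with hSdef
      set T : Finset V := S ∩ A with hTdef
      have huT : u ∈ T := Finset.mem_inter.mpr ⟨hSx u, huA⟩
      have hTS : T ⊆ S := Finset.inter_subset_left
      -- the per-vertex decomposition bound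
      have step4 : ∀ y ∈ T,
          (∑ C₀ ∈ T.powerset, if y ∈ C₀ then P r (ECl E T u C₀) else 0)
            ≤ P r {ω | ConnIn E ω ↑S u y} := by
        intro y hy
        rw [← Finset.sum_filter]
        rw [← measure_biUnion_finset
          (fun C₀ _ C₁ _ h => ECl_disjoint h)
          (fun C₀ _ => local_measurableSet ECl_local)]
        refine measure_mono ?_
        intro ω hω
        simp only [Set.mem_iUnion] at hω
        obtain ⟨C₀, hC₀, hωE⟩ := hω
        have hyC : y ∈ C₀ := (Finset.mem_filter.mp hC₀).2
        exact connIn_mono_set (Finset.coe_subset.mpr hTS) ((hωE y).mpr hyC)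
      have star : ∀ v ∈ A \ S,
          P r {ω | ConnIn E ω ↑A u v} ≤
          ∑ y ∈ T, ∑ z ∈ A \ S,
            P r {ω | ConnIn E ω ↑S u y} *
              (ENNReal.ofReal (edgeProb E r s(y, z)) * P r {ω | ConnIn E ω ↑A z v}) := by
        intro v hv
        obtain ⟨hvA, hvS⟩ := Finset.mem_sdiff.mp hv
        have step1 : {ω : Config V | ConnIn E ω ↑A u v} ⊆
            ⋃ C₀ ∈ T.powerset, (ECl E T u C₀ ∩ {ω | ConnIn E ω ↑A u v}) := by
          intro ω hω
          exact Set.mem_biUnion (Finset.mem_powerset.mpr (Finset.filter_subset _ _))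
            ⟨ECl_total huT ω, hω⟩
        have dagger : ∀ C₀ ∈ T.powerset,
            P r (ECl E T u C₀ ∩ {ω | ConnIn E ω ↑A u v}) ≤
            ∑ y ∈ T, ∑ z ∈ A \ S,
              (if y ∈ C₀ then P r (ECl E T u C₀) else 0) *
                (ENNReal.ofReal (edgeProb E r s(y, z)) * P r {ω | ConnIn E ω ↑A z v}) := by
          intro C₀ hC₀mem
          have hC : C₀ ⊆ T := Finset.mem_powerset.mp hC₀mem
          have hsub : ECl E T u C₀ ∩ {ω : Config V | ConnIn E ω ↑A u v} ⊆
              ⋃ y ∈ T, ⋃ z ∈ A \ S,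
                (if y ∈ C₀ then
                  ECl E T u C₀ ∩ {ω : Config V | ω s(y, z) = true} ∩
                    {ω | ConnIn E ω ↑(A \ C₀) z v}
                else ∅) := by
            rintro ω ⟨hωE, hωc⟩
            have huC : u ∈ C₀ := ECl_mem_of_self hωE
            have hvC : v ∉ (↑C₀ : Set V) := fun h => hvS (hTS (hC h))
            obtain ⟨y, z, hy, hz, hR, hsuf⟩ :=
              exit_lemma (C := (↑C₀ : Set V)) hωc (Finset.mem_coe.mpr huC) hvC
            obtain ⟨hyA, hzA, hed, hop⟩ := hR
            have hyC : y ∈ C₀ := hy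
            have hzS : z ∉ S := by
              intro hzS
              apply hz
              have h1 : ConnIn E ω ↑T u y := (hωE y).mpr hyC
              have h2 : ConnIn E ω ↑T u z :=
                h1.tail ⟨Finset.mem_coe.mpr (hC hyC),
                  Finset.mem_coe.mpr (Finset.mem_inter.mpr ⟨hzS, Finset.mem_coe.mp hzA⟩),
                  hed, hop⟩
              exact Finset.mem_coe.mpr ((hωE z).mp h2)
            refine Set.mem_biUnion (hC hyC) ?_
            refine Set.mem_biUnion
              (Finset.mem_sdiff.mpr ⟨Finset.mem_coe.mp hzA, hzS⟩) ?_
            rw [if_pos hyC]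
            refine ⟨⟨hωE, hop⟩, ?_⟩
            refine Relation.ReflTransGen.mono ?_ _ _ hsuf
            rintro a b ⟨⟨haA, hbA, he, ho⟩, haC, hbC⟩
            refine ⟨?_, ?_, he, ho⟩
            · exact Finset.mem_coe.mpr
                (Finset.mem_sdiff.mpr ⟨Finset.mem_coe.mp haA, fun h => haC h⟩)
            · exact Finset.mem_coe.mpr
                (Finset.mem_sdiff.mpr ⟨Finset.mem_coe.mp hbA, fun h => hbC h⟩)
          calc P r (ECl E T u C₀ ∩ {ω | ConnIn E ω ↑A u v})
              ≤ ∑ y ∈ T, ∑ z ∈ A \ S, P r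
                  (if y ∈ C₀ then
                    ECl E T u C₀ ∩ {ω : Config V | ω s(y, z) = true} ∩
                      {ω | ConnIn E ω ↑(A \ C₀) z v}
                  else ∅) :=
                le_trans (measure_mono hsub)
                  (le_trans (measure_biUnion_finset_le _ _)
                    (Finset.sum_le_sum fun y _ => measure_biUnion_finset_le _ _))
            _ ≤ ∑ y ∈ T, ∑ z ∈ A \ S,
                  (if y ∈ C₀ then P r (ECl E T u C₀) else 0) *
                    (ENNReal.ofReal (edgeProb E r s(y, z)) *
                      P r {ω | ConnIn E ω ↑A z v}) := by
                refine Finset.sum_le_sum fun y hyT => Finset.sum_le_sum fun z hz => ?_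
                by_cases hyC : y ∈ C₀
                · rw [if_pos hyC, if_pos hyC]
                  obtain ⟨hzA, hzS⟩ := Finset.mem_sdiff.mp hz
                  have hd12 : Disjoint (T.sym2.filter fun e => ∃ a ∈ C₀, a ∈ e)
                      ({s(y, z)} : Finset (Sym2 V)) := by
                    rw [Finset.disjoint_right]
                    intro e he
                    rw [Finset.mem_singleton] at he
                    subst he
                    intro hmem
                    have h1 := (Finset.mem_filter.mp hmem).1
                    have hzT : z ∈ T := Finset.mem_sym2_iff.mp h1 z (Sym2.mem_mk_right y z)
                    exact hzS (hTS hzT)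
                  have hd13 : Disjoint (T.sym2.filter fun e => ∃ a ∈ C₀, a ∈ e)
                      ((A \ C₀).sym2) := by
                    rw [Finset.disjoint_left]
                    intro e hef heA
                    obtain ⟨-, a, haC, hae⟩ := Finset.mem_filter.mp hef
                    exact (Finset.mem_sdiff.mp (Finset.mem_sym2_iff.mp heA a hae)).2 haC
                  have hd23 : Disjoint ({s(y, z)} : Finset (Sym2 V)) ((A \ C₀).sym2) := by
                    rw [Finset.disjoint_left]
                    intro e he hA2
                    rw [Finset.mem_singleton] at he
                    subst he
                    exact (Finset.mem_sdiff.mp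
                      (Finset.mem_sym2_iff.mp hA2 y (Sym2.mem_mk_left y z))).2 hyC
                  have hopen_local : EvLocal {s(y, z)}
                      {ω : Config V | ω s(y, z) = true} := by
                    intro ω ω' hag h
                    rw [Set.mem_setOf_eq, ← hag _ (Finset.mem_singleton_self _)]
                    exact h
                  rw [indep3_of_local (P r)
                    (fun e b => ENNReal.ofReal
                      (if b then edgeProb E r e else 1 - edgeProb E r e)) hcyl hd12 hd13 hd23
                    ECl_local hopen_local (connIn_local E (A \ C₀) z v)]
                  rw [hw_true, mul_assoc]
                  refine mul_le_mul_right (mul_le_mul_right ?_ _) _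
                  exact measure_mono fun ω hω =>
                    connIn_mono_set (Finset.coe_subset.mpr Finset.sdiff_subset) hω
                · rw [if_neg hyC, if_neg hyC]
                  simp
        calc P r {ω | ConnIn E ω ↑A u v}
            ≤ ∑ C₀ ∈ T.powerset, P r (ECl E T u C₀ ∩ {ω | ConnIn E ω ↑A u v}) :=
              le_trans (measure_mono step1) (measure_biUnion_finset_le _ _)
          _ ≤ ∑ C₀ ∈ T.powerset, ∑ y ∈ T, ∑ z ∈ A \ S,
                (if y ∈ C₀ then P r (ECl E T u C₀) else 0) *
                  (ENNReal.ofReal (edgeProb E r s(y, z)) *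
                    P r {ω | ConnIn E ω ↑A z v}) :=
              Finset.sum_le_sum dagger
          _ = ∑ y ∈ T, ∑ z ∈ A \ S,
                (∑ C₀ ∈ T.powerset, if y ∈ C₀ then P r (ECl E T u C₀) else 0) *
                  (ENNReal.ofReal (edgeProb E r s(y, z)) *
                    P r {ω | ConnIn E ω ↑A z v}) := by
              rw [Finset.sum_comm]
              refine Finset.sum_congr rfl fun y _ => ?_
              rw [Finset.sum_comm]
              refine Finset.sum_congr rfl fun z _ => ?_
              rw [Finset.sum_mul]
          _ ≤ ∑ y ∈ T, ∑ z ∈ A \ S,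
                P r {ω | ConnIn E ω ↑S u y} *
                  (ENNReal.ofReal (edgeProb E r s(y, z)) *
                    P r {ω | ConnIn E ω ↑A z v}) := by
              refine Finset.sum_le_sum fun y hyT => Finset.sum_le_sum fun z _ => ?_
              exact mul_le_mul_left (step4 y hyT) _
      have step6 : (∑ y ∈ T, ∑ z ∈ A \ S,
          P r {ω | ConnIn E ω ↑S u y} * ENNReal.ofReal (edgeProb E r s(y, z)))
          ≤ psi E P r u S := by
        have hexp : ∀ y z : V, ENNReal.ofReal (edgeProb E r s(y, z)) =
            ∑ i : Fin N, if s(y, z) ∈ E i then ENNReal.ofReal (r i) else 0 := by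
          intro y z
          rw [edgeProb, ENNReal.ofReal_sum_of_nonneg]
          · refine Finset.sum_congr rfl fun i _ => ?_
            split
            · rfl
            · exact ENNReal.ofReal_zero
          · intro i _
            split
            · exact hr0 i
            · exact le_refl 0
        calc ∑ y ∈ T, ∑ z ∈ A \ S,
              P r {ω | ConnIn E ω ↑S u y} * ENNReal.ofReal (edgeProb E r s(y, z))
            = ∑ y ∈ T, ∑ i : Fin N, ∑ z ∈ A \ S,
              P r {ω | ConnIn E ω ↑S u y} *
                (if s(y, z) ∈ E i then ENNReal.ofReal (r i) else 0) := by
              refine Finset.sum_congr rfl fun y _ => ?_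
              calc ∑ z ∈ A \ S,
                    P r {ω | ConnIn E ω ↑S u y} * ENNReal.ofReal (edgeProb E r s(y, z))
                  = ∑ z ∈ A \ S, ∑ i : Fin N,
                    P r {ω | ConnIn E ω ↑S u y} *
                      (if s(y, z) ∈ E i then ENNReal.ofReal (r i) else 0) := by
                    refine Finset.sum_congr rfl fun z _ => ?_
                    rw [hexp y z, Finset.mul_sum]
                _ = ∑ i : Fin N, ∑ z ∈ A \ S,
                    P r {ω | ConnIn E ω ↑S u y} *
                      (if s(y, z) ∈ E i then ENNReal.ofReal (r i) else 0) :=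
                    Finset.sum_comm
          _ = ∑ i : Fin N, ∑ y ∈ T, ∑ z ∈ A \ S,
              P r {ω | ConnIn E ω ↑S u y} *
                (if s(y, z) ∈ E i then ENNReal.ofReal (r i) else 0) := Finset.sum_comm
          _ ≤ ∑ i : Fin N, ENNReal.ofReal (r i) * ∑ y ∈ S, ∑' z : V,
              (if z ∉ S ∧ s(y, z) ∈ E i then P r {ω | ConnIn E ω ↑S u y} else 0) := by
              refine Finset.sum_le_sum fun i _ => ?_
              calc ∑ y ∈ T, ∑ z ∈ A \ S,
                    P r {ω | ConnIn E ω ↑S u y} *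
                      (if s(y, z) ∈ E i then ENNReal.ofReal (r i) else 0)
                  ≤ ∑ y ∈ S, ∑ z ∈ A \ S,
                    P r {ω | ConnIn E ω ↑S u y} *
                      (if s(y, z) ∈ E i then ENNReal.ofReal (r i) else 0) :=
                    Finset.sum_le_sum_of_subset hTS
                _ = ∑ y ∈ S, ENNReal.ofReal (r i) * ∑ z ∈ A \ S,
                    (if z ∉ S ∧ s(y, z) ∈ E i then P r {ω | ConnIn E ω ↑S u y} else 0) := by
                    refine Finset.sum_congr rfl fun y _ => ?_
                    rw [Finset.mul_sum]
                    refine Finset.sum_congr rfl fun z hz => ?_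
                    have hzS : z ∉ S := (Finset.mem_sdiff.mp hz).2
                    by_cases hE : s(y, z) ∈ E i
                    · rw [if_pos hE, if_pos ⟨hzS, hE⟩, mul_comm]
                    · rw [if_neg hE, if_neg (fun hc => hE hc.2), mul_zero, mul_zero]
                _ ≤ ∑ y ∈ S, ENNReal.ofReal (r i) * ∑' z : V,
                    (if z ∉ S ∧ s(y, z) ∈ E i then P r {ω | ConnIn E ω ↑S u y} else 0) :=
                    Finset.sum_le_sum fun y _ =>
                      mul_le_mul_right (ENNReal.sum_le_tsum _) _
                _ = ENNReal.ofReal (r i) * ∑ y ∈ S, ∑' z : V,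
                    (if z ∉ S ∧ s(y, z) ∈ E i then P r {ω | ConnIn E ω ↑S u y} else 0) :=
                    (Finset.mul_sum _ _ _).symm
          _ = psi E P r u S := rfl
      have h2 : ∑ v ∈ A \ S, P r {ω | ConnIn E ω ↑A u v} ≤ psi E P r u S * X := by
        calc ∑ v ∈ A \ S, P r {ω | ConnIn E ω ↑A u v}
            ≤ ∑ v ∈ A \ S, ∑ y ∈ T, ∑ z ∈ A \ S,
              P r {ω | ConnIn E ω ↑S u y} *
                (ENNReal.ofReal (edgeProb E r s(y, z)) * P r {ω | ConnIn E ω ↑A z v}) :=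
              Finset.sum_le_sum star
          _ = ∑ y ∈ T, ∑ z ∈ A \ S,
              P r {ω | ConnIn E ω ↑S u y} *
                (ENNReal.ofReal (edgeProb E r s(y, z)) *
                  ∑ v ∈ A \ S, P r {ω | ConnIn E ω ↑A z v}) := by
              rw [Finset.sum_comm]
              refine Finset.sum_congr rfl fun y _ => ?_
              rw [Finset.sum_comm]
              refine Finset.sum_congr rfl fun z _ => ?_
              rw [← Finset.mul_sum, ← Finset.mul_sum]
          _ ≤ ∑ y ∈ T, ∑ z ∈ A \ S,
              P r {ω | ConnIn E ω ↑S u y} *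
                (ENNReal.ofReal (edgeProb E r s(y, z)) * X) := by
              refine Finset.sum_le_sum fun y _ => Finset.sum_le_sum fun z _ => ?_
              refine mul_le_mul_right (mul_le_mul_right ?_ _) _
              exact le_trans (Finset.sum_le_sum_of_subset (Finset.sdiff_subset)) (hfX z)
          _ = (∑ y ∈ T, ∑ z ∈ A \ S,
              P r {ω | ConnIn E ω ↑S u y} * ENNReal.ofReal (edgeProb E r s(y, z))) * X := by
              rw [Finset.sum_mul]
              refine Finset.sum_congr rfl fun y _ => ?_
              rw [Finset.sum_mul]
              refine Finset.sum_congr rfl fun z _ => ?_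
              rw [mul_assoc]
          _ ≤ psi E P r u S * X := mul_le_mul_left step6 X
      have h1 : ∑ v ∈ A ∩ S, P r {ω | ConnIn E ω ↑A u v} ≤ M := by
        calc ∑ v ∈ A ∩ S, P r {ω | ConnIn E ω ↑A u v} ≤ ∑ _v ∈ A ∩ S, 1 :=
              Finset.sum_le_sum fun v _ => prob_le_one
          _ = ((A ∩ S).card : ℝ≥0∞) := by simp
          _ ≤ (S.card : ℝ≥0∞) :=
              Nat.cast_le.mpr (Finset.card_le_card Finset.inter_subset_right)
          _ ≤ M := by rw [hM]; exact le_iSup (fun x => ((Sx x).card : ℝ≥0∞)) u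
      have hψθ : psi E P r u S ≤ θ₀ := by rw [hθ]; exact le_iSup (fun x => psi E P r x (Sx x)) u
      calc ∑ v ∈ A, P r {ω | ConnIn E ω ↑A u v}
          = ∑ v ∈ A ∩ S, P r {ω | ConnIn E ω ↑A u v}
            + ∑ v ∈ A \ S, P r {ω | ConnIn E ω ↑A u v} :=
            (Finset.sum_inter_add_sum_sdiff A S _).symm
        _ ≤ M + θ₀ * X := add_le_add h1 (le_trans h2 (mul_le_mul_left hψθ X))
  have hfinal : X ≤ M + θ₀ * X := iSup_le key
  have h10 : (1 : ℝ≥0∞) - θ₀ ≠ 0 := by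
    intro h
    exact absurd (tsub_eq_zero_iff_le.mp h) (not_le.mpr hθlt)
  have h1t : (1 : ℝ≥0∞) - θ₀ ≠ ⊤ := ne_top_of_le_ne_top one_ne_top tsub_le_self
  rw [ENNReal.le_div_iff_mul_le (Or.inl h10) (Or.inl h1t)]
  have hθX : θ₀ * X ≠ ⊤ := ENNReal.mul_ne_top hθlt.ne_top hXne
  calc X * (1 - θ₀) = X * 1 - X * θ₀ := ENNReal.mul_sub (fun _ _ => hXne)
    _ = X - θ₀ * X := by rw [mul_one, mul_comm]
    _ ≤ (M + θ₀ * X) - θ₀ * X := tsub_le_tsub_right hfinal _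
    _ = M := ENNReal.add_sub_cancel_right hθX


end InhomPerc
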